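/- Minimality and maximality of the unravelled canonical models: the unravelling U(Mc^min) of the canonical pseudo-model of SCmin is a minimal partial epistemic model (for all histories h, h' with live(h) ⊊ live(h') there is an alive agent of h distinguishing them), and the unravelling U(Mc^max) of the canonical pseudo-model of SCmax is a maximal partial epistemic model (for every history h' and every nonempty B ⊊ live(h') there is a history h with live(h) = B and h ∼^U_a h' for all a ∈ B); the same holds for their quotients by the equivalence ≡. -/

import Mathlib

attribute [local instance] Classical.propDecidable

noncomputable section

/-- Formulas of the epistemic language `L_D` with distributed knowledge `D_B`
for nonempty groups `B` of agents. -/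
inductive Form (A AP : Type) : Type
  | atom : AP → Form A AP
  | neg  : Form A AP → Form A AP
  | and  : Form A AP → Form A AP → Form A AP
  | dk   : (B : Finset A) → B.Nonempty → Form A AP → Form A AP

namespace Form

variable {A AP : Type}

/-- Disjunction, `φ ∨ ψ := ¬(¬φ ∧ ¬ψ)`. -/
def or (φ ψ : Form A AP) : Form A AP := neg ((neg φ).and (neg ψ))

/-- Implication, `φ ⇒ ψ := ¬φ ∨ ψ`. -/
def imp (φ ψ : Form A AP) : Form A AP := (neg φ).or ψ

/-- `⊤ := p ∨ ¬p`. -/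
def verum [Nonempty AP] : Form A AP :=
  (atom (Classical.arbitrary AP)).or (neg (atom (Classical.arbitrary AP)))

/-- `⊥ := ¬⊤`. -/
def falsum [Nonempty AP] : Form A AP := neg verum

/-- Individual knowledge `K_a φ := D_{{a}} φ`. -/
def K (a : A) (φ : Form A AP) : Form A AP := dk {a} (Finset.singleton_nonempty a) φ

/-- `dead_a := K_a ⊥`. -/
def deadAgent [Nonempty AP] (a : A) : Form A AP := K a falsum

/-- `alive_a := ¬dead_a`. -/
def aliveAgent [Nonempty AP] (a : A) : Form A AP := (deadAgent a).neg

/-- `alive_B := ¬ D_B ⊥`. -/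
def aliveGrp [Nonempty AP] (B : Finset A) (hB : B.Nonempty) : Form A AP := (dk B hB falsum).neg

/-- Finite conjunction. -/
def bigAnd [Nonempty AP] : List (Form A AP) → Form A AP
  | [] => verum
  | φ :: t => φ.and (bigAnd t)

/-- Finite disjunction. -/
def bigOr [Nonempty AP] : List (Form A AP) → Form A AP
  | [] => falsum
  | φ :: t => φ.or (bigOr t)

/-- `dead_C := ⋀_{a ∈ C} dead_a`. -/
def deadGrp [Nonempty AP] (C : Finset A) : Form A AP := bigAnd (C.toList.map deadAgent)

end Form

/-- A propositional tautology: true under every assignment that interprets `¬` and `∧`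
classically (atoms and `D_B`-formulas are treated as opaque). -/
def IsTaut {A AP : Type} (φ : Form A AP) : Prop :=
  ∀ v : Form A AP → Prop,
    (∀ ψ : Form A AP, v ψ.neg ↔ ¬ v ψ) →
    (∀ ψ χ : Form A AP, v (ψ.and χ) ↔ (v ψ ∧ v χ)) →
    v φ

theorem unionNE {α : Type} [DecidableEq α] {s t : Finset α} (h : s.Nonempty) :
    (s ∪ t).Nonempty :=
  ⟨h.choose, Finset.mem_union_left _ h.choose_spec⟩

section ProofSystem

variable {A AP : Type} [Fintype A] [Nonempty AP]

/-- The proof system `SC` (axioms `K`, `B`, `4`, `Mono`, `Union`, `NE`, `P`, all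
propositional tautologies, modus ponens and necessitation), extended by an arbitrary
additional set `Ax` of axioms. -/
inductive Prf (Ax : Form A AP → Prop) : Form A AP → Prop
  | taut {φ : Form A AP} : IsTaut φ → Prf Ax φ
  | mp {φ ψ : Form A AP} : Prf Ax (φ.imp ψ) → Prf Ax φ → Prf Ax ψ
  | nec {φ : Form A AP} (B : Finset A) (hB : B.Nonempty) :
      Prf Ax φ → Prf Ax (Form.dk B hB φ)
  | axK {φ ψ : Form A AP} (B : Finset A) (hB : B.Nonempty) :
      Prf Ax ((Form.dk B hB (φ.imp ψ)).imp ((Form.dk B hB φ).imp (Form.dk B hB ψ)))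
  | axB {φ : Form A AP} (B : Finset A) (hB : B.Nonempty) :
      Prf Ax (φ.imp (Form.dk B hB (Form.neg (Form.dk B hB φ.neg))))
  | ax4 {φ : Form A AP} (B : Finset A) (hB : B.Nonempty) :
      Prf Ax ((Form.dk B hB φ).imp (Form.dk B hB (Form.dk B hB φ)))
  | axMono {φ : Form A AP} (B B' : Finset A) (hB : B.Nonempty) (hB' : B'.Nonempty)
      (hsub : B ⊆ B') : Prf Ax ((Form.dk B hB φ).imp (Form.dk B' hB' φ))
  | axUnion (B B' : Finset A) (hB : B.Nonempty) (hB' : B'.Nonempty) :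
      Prf Ax (((Form.aliveGrp B hB).and (Form.aliveGrp B' hB')).imp
        (Form.aliveGrp (B ∪ B') (unionNE hB)))
  | axNE : Prf Ax (Form.bigOr ((Finset.univ : Finset A).toList.map Form.aliveAgent))
  | axP {φ : Form A AP} (B : Finset A) (hB : B.Nonempty) :
      Prf Ax ((((Form.aliveGrp B hB).and (Form.deadGrp Bᶜ)).and φ).imp
        (Form.dk B hB ((Form.deadGrp Bᶜ).imp φ)))
  | extra {φ : Form A AP} : Ax φ → Prf Ax φ

/-- Provability in `SC` itself (no extra axioms). -/
def SC : Form A AP → Prop := Prf (fun _ => False)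

/-- Instances of Axiom `Min : alive_B ∧ dead_{A∖B} ⇒ D_B dead_{A∖B}` for `B ⊊ A`. -/
def MinAx : Form A AP → Prop := fun φ =>
  ∃ (B : Finset A) (hB : B.Nonempty), B ≠ Finset.univ ∧
    φ = ((Form.aliveGrp B hB).and (Form.deadGrp Bᶜ)).imp (Form.dk B hB (Form.deadGrp Bᶜ))

/-- Instances of Axiom `Max : alive_B ⇒ ¬ D_B ¬ dead_{A∖B}` for `B ⊊ A`. -/
def MaxAx : Form A AP → Prop := fun φ =>
  ∃ (B : Finset A) (hB : B.Nonempty), B ≠ Finset.univ ∧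
    φ = (Form.aliveGrp B hB).imp (Form.neg (Form.dk B hB (Form.neg (Form.deadGrp Bᶜ))))

/-- Provability in `SCmin = SC + Min`. -/
def SCmin : Form A AP → Prop := Prf MinAx

/-- Provability in `SCmax = SC + Max`. -/
def SCmax : Form A AP → Prop := Prf MaxAx

/-- `Γ ⊢_P φ` : some finite conjunction of members of `Γ` provably implies `φ`. -/
def ProvesFrom (P : Form A AP → Prop) (Γ : Set (Form A AP)) (φ : Form A AP) : Prop :=
  ∃ L : List (Form A AP), (∀ γ ∈ L, γ ∈ Γ) ∧ P ((Form.bigAnd L).imp φ)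

/-- Consistency of a set of formulas with respect to a provability predicate `P`. -/
def ConsistentSet (P : Form A AP → Prop) (Γ : Set (Form A AP)) : Prop :=
  ¬ ProvesFrom P Γ Form.falsum

/-- Maximal consistent sets of formulas. -/
def MaxConsistent (P : Form A AP → Prop) (Γ : Set (Form A AP)) : Prop :=
  ConsistentSet P Γ ∧ ∀ φ ∉ Γ, ¬ ConsistentSet P (insert φ Γ)

end ProofSystem

/-! ### Simplicial models -/

/-- The data of a (generalized) simplicial model: a set `S` of simplexes over the vertex
type `V`, a colouring `chi`, a set of worlds `Wld` and a labelling of worlds. -/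
structure SimpData (A AP V : Type) where
  S : Set (Finset V)
  chi : V → A
  Wld : Set (Finset V)
  label : Finset V → Set AP

namespace SimpData

variable {A AP V : Type}

/-- A facet: a simplex maximal under inclusion. -/
def IsFacet (C : SimpData A AP V) (X : Finset V) : Prop :=
  X ∈ C.S ∧ ∀ Y ∈ C.S, X ⊆ Y → X = Y

/-- `⟨V,S,chi⟩` is a chromatic simplicial complex: simplexes are nonempty, every
singleton is a simplex, `S` is downward closed, and every simplex has pairwise
distinct colours. -/
def IsComplex (C : SimpData A AP V) : Prop :=
  (∀ X ∈ C.S, X.Nonempty) ∧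
  (∀ v : V, ({v} : Finset V) ∈ C.S) ∧
  (∀ X ∈ C.S, ∀ Y : Finset V, Y ⊆ X → Y.Nonempty → Y ∈ C.S) ∧
  (∀ X ∈ C.S, ∀ v ∈ X, ∀ w ∈ X, C.chi v = C.chi w → v = w)

/-- `C` is a generalized simplicial model: a chromatic simplicial complex together
with a set of worlds `Wld` with `Facets(C) ⊆ Wld ⊆ S`. -/
def IsModel (C : SimpData A AP V) : Prop :=
  C.IsComplex ∧ (∀ X, C.IsFacet X → X ∈ C.Wld) ∧ C.Wld ⊆ C.S

/-- The model is minimal: the worlds are exactly the facets. -/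
def Minimal (C : SimpData A AP V) : Prop := ∀ X, X ∈ C.Wld ↔ C.IsFacet X

/-- The model is maximal: every simplex is a world. -/
def Maximal (C : SimpData A AP V) : Prop := C.Wld = C.S

end SimpData

/-- Satisfaction on simplicial models: `C,w ⊨ D_B φ` iff `φ` holds at every world `w'`
with `B ⊆ chi(w ∩ w')`. -/
def SimpData.sat {A AP V : Type} (C : SimpData A AP V) : Finset V → Form A AP → Prop
  | w, .atom p => p ∈ C.label w
  | w, .neg φ => ¬ C.sat w φ
  | w, .and φ ψ => C.sat w φ ∧ C.sat w ψ
  | w, .dk B _ φ => ∀ w' ∈ C.Wld, (↑B : Set A) ⊆ C.chi '' ((↑w : Set V) ∩ ↑w') → C.sat w' φ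

/-! ### Partial epistemic models -/

/-- The data of a partial epistemic model: an accessibility relation for each agent and
a labelling of worlds. -/
structure PEData (A AP W : Type) where
  rel : A → W → W → Prop
  label : W → Set AP

namespace PEData

variable {A AP W : Type}

/-- Each relation is a partial equivalence relation (symmetric and transitive). -/
def IsPE (M : PEData A AP W) : Prop := ∀ a : A, Symmetric (M.rel a) ∧ Transitive (M.rel a)

/-- The set of agents alive in a world. -/
def live (M : PEData A AP W) (w : W) : Set A := {a | M.rel a w w}

/-- Every world has at least one alive agent. -/
def NoEmptyWorld (M : PEData A AP W) : Prop := ∀ w : W, (M.live w).Nonempty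

/-- Distinct worlds with the same alive agents are distinguished by some alive agent. -/
def Proper (M : PEData A AP W) : Prop :=
  ∀ w w' : W, w ≠ w' → M.live w = M.live w' → ∃ a ∈ M.live w, ¬ M.rel a w w'

/-- The model has no sub-world. -/
def Minimal (M : PEData A AP W) : Prop :=
  ∀ w w' : W, M.live w ⊂ M.live w' → ∃ a ∈ M.live w, ¬ M.rel a w w'

/-- The model has all sub-worlds. -/
def Maximal (M : PEData A AP W) : Prop :=
  ∀ w' : W, ∀ B : Set A, B.Nonempty → B ⊂ M.live w' →
    ∃ w : W, M.live w = B ∧ ∀ a ∈ B, M.rel a w w'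

end PEData

/-- Satisfaction on partial epistemic models: `M,w ⊨ D_B φ` iff `φ` holds at every `w'`
with `w ∼_a w'` for all `a ∈ B`. -/
def PEData.sat {A AP W : Type} (M : PEData A AP W) : W → Form A AP → Prop
  | w, .atom p => p ∈ M.label w
  | w, .neg φ => ¬ M.sat w φ
  | w, .and φ ψ => M.sat w φ ∧ M.sat w ψ
  | w, .dk B _ φ => ∀ w' : W, (∀ a ∈ B, M.rel a w w') → M.sat w' φ

/-- The partial epistemic model `κ(C)` associated with a simplicial model `C`:
same worlds, `w ∼_a w'` iff `a ∈ chi(w ∩ w')`, same labelling. -/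
def kappa {A AP V : Type} (C : SimpData A AP V) : PEData A AP {w : Finset V // w ∈ C.Wld} where
  rel := fun a w w' => a ∈ C.chi '' ((↑w.1 : Set V) ∩ ↑w'.1)
  label := fun w => C.label w.1

/-- Vertices of `σ(M)`: pairs `v^w_a = (a, [w]_a)` with `a` alive in `w`. -/
def sigmaVert {A AP W : Type} (M : PEData A AP W) : Type :=
  {v : A × Set W // ∃ w : W, M.rel v.1 w w ∧ v.2 = {w' | M.rel v.1 w w'}}

/-- The world `X_w = { v^w_a | a ∈ live(w) }` of `σ(M)`. -/
def sigmaWorld {A AP W : Type} [Fintype A] (M : PEData A AP W) (w : W) :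
    Finset (sigmaVert M) :=
  ((Finset.univ : Finset A).filter (fun a => M.rel a w w)).attach.image
    (fun a => ⟨(a.1, {w' | M.rel a.1 w w'}),
      ⟨w, by exact (Finset.mem_filter.mp a.2).2, rfl⟩⟩)

/-- The simplicial model `σ(M)` associated with a partial epistemic model `M`:
simplexes are the nonempty subsets of the sets `X_w`, worlds are the `X_w`,
colouring is the first projection, and `ℓ(X_w) = L(w)`. -/
def sigmaModel {A AP W : Type} [Fintype A] (M : PEData A AP W) :
    SimpData A AP (sigmaVert M) where
  S := {X | X.Nonempty ∧ ∃ w : W, X ⊆ sigmaWorld M w}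
  chi := fun v => v.1.1
  Wld := {X | ∃ w : W, X = sigmaWorld M w}
  label := fun X => {p | ∃ w : W, X = sigmaWorld M w ∧ p ∈ M.label w}

/-! ### Pseudo-models, the canonical model and unravelling -/

/-- The data of a pseudo-model: a relation `∼_B` for every group `B ⊆ A`. -/
structure PseudoData (A AP W : Type) where
  rel : Finset A → W → W → Prop
  label : W → Set AP

/-- `M` is a pseudo-model: each `∼_B` is symmetric and transitive, the relations are
antitone (`∼_{B'} ⊆ ∼_B` for `B ⊆ B'`), and `w ∼_B w` together with `w ∼_{B'} w`
implies `w ∼_{B ∪ B'} w`. -/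
def PseudoData.IsPseudo {A AP W : Type} [DecidableEq A] (M : PseudoData A AP W) : Prop :=
  (∀ B : Finset A, Symmetric (M.rel B)) ∧
  (∀ B : Finset A, Transitive (M.rel B)) ∧
  (∀ B B' : Finset A, B ⊆ B' → ∀ w w' : W, M.rel B' w w' → M.rel B w w') ∧
  (∀ (w : W) (B B' : Finset A), M.rel B w w → M.rel B' w w → M.rel (B ∪ B') w w)

/-- Satisfaction on pseudo-models: `D_B φ` quantifies over `∼_B`-successors. -/
def PseudoData.sat {A AP W : Type} (M : PseudoData A AP W) : W → Form A AP → Prop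
  | w, .atom p => p ∈ M.label w
  | w, .neg φ => ¬ M.sat w φ
  | w, .and φ ψ => M.sat w φ ∧ M.sat w ψ
  | w, .dk B _ φ => ∀ w' : W, M.rel B w w' → M.sat w' φ

/-- The canonical pseudo-model of a proof system `P`: worlds are the maximal
`P`-consistent sets, `Γ ∼_B Δ` iff every `φ` with `D_B φ ∈ Γ` satisfies `φ ∈ Δ`,
and `L(Γ) = Γ ∩ AP`. -/
def canonicalPsm (A AP : Type) [Fintype A] [Nonempty AP] (P : Form A AP → Prop) :
    PseudoData A AP {Γ : Set (Form A AP) // MaxConsistent P Γ} where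
  rel := fun B Γ Δ => ∀ (hB : B.Nonempty) (φ : Form A AP), Form.dk B hB φ ∈ Γ.1 → φ ∈ Δ.1
  label := fun Γ => {p | Form.atom p ∈ Γ.1}

/-- `IsHist M w l` : the sequence starting at `w` with steps `l` is a history of `M`. -/
def IsHist {A AP W : Type} (M : PseudoData A AP W) : W → List (Finset A × W) → Prop
  | _, [] => True
  | w, (B, w') :: t => M.rel B w w' ∧ IsHist M w' t

/-- A history `(w₀, B₁, w₁, …, B_k, w_k)` of a pseudo-model `M`. -/
structure Hist {A AP W : Type} (M : PseudoData A AP W) where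
  first : W
  steps : List (Finset A × W)
  valid : IsHist M first steps

/-- The last world of a history. -/
def Hist.last {A AP W : Type} {M : PseudoData A AP W} (h : Hist M) : W :=
  (h.steps.map Prod.snd).getLastD h.first

/-- `h →_a h'` : `h'` extends `h` by one step `(B, w)` with `a ∈ B`. -/
def histStep {A AP W : Type} (M : PseudoData A AP W) (a : A) (h h' : Hist M) : Prop :=
  ∃ (B : Finset A) (w : W), a ∈ B ∧ h'.first = h.first ∧ h'.steps = h.steps ++ [(B, w)]

/-- `∼^U_a` : the symmetric-transitive closure of `→_a`. -/
def histRel {A AP W : Type} (M : PseudoData A AP W) (a : A) : Hist M → Hist M → Prop :=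
  Relation.TransGen (fun h h' => histStep M a h h' ∨ histStep M a h' h)

/-- The unravelling `U(M)` of a pseudo-model `M`: worlds are histories, relations are
the `∼^U_a`, and `L^U(h) = L(last h)`. -/
def unravel {A AP W : Type} (M : PseudoData A AP W) : PEData A AP (Hist M) where
  rel := histRel M
  label := fun h => M.label h.last

/-- World-equivalence `w ≡ w'` : same alive agents and related by every alive agent. -/
def pequiv {A AP W : Type} (M : PEData A AP W) (w w' : W) : Prop :=
  M.live w = M.live w' ∧ ∀ a ∈ M.live w, M.rel a w w'

/-- The quotient of a partial epistemic model by world-equivalence. -/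
def properify {A AP W : Type} (M : PEData A AP W) : PEData A AP (Quot (pequiv M)) where
  rel := fun a x y => ∃ w w' : W, x = Quot.mk _ w ∧ y = Quot.mk _ w' ∧ M.rel a w w'
  label := fun x => {p | ∃ w : W, x = Quot.mk _ w ∧ p ∈ M.label w}

/-! ### Local simplicial models, morphisms and the guarded positive fragment -/

/-- The data of a local simplicial model: atomic propositions label the vertices. -/
structure LocalSimpData (A AP V : Type) where
  S : Set (Finset V)
  chi : V → A
  Wld : Set (Finset V)
  vlabel : V → Set AP

namespace LocalSimpData

variable {A AP V : Type}

/-- A facet: a simplex maximal under inclusion. -/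
def IsFacet (C : LocalSimpData A AP V) (X : Finset V) : Prop :=
  X ∈ C.S ∧ ∀ Y ∈ C.S, X ⊆ Y → X = Y

/-- `C` is a local simplicial model with respect to the ownership map `owner : AP → A`:
a chromatic simplicial complex with `Facets ⊆ Wld ⊆ S`, where each vertex is labelled
with atomic propositions belonging to its colour. -/
def IsModel (C : LocalSimpData A AP V) (owner : AP → A) : Prop :=
  (∀ X ∈ C.S, X.Nonempty) ∧
  (∀ v : V, ({v} : Finset V) ∈ C.S) ∧
  (∀ X ∈ C.S, ∀ Y : Finset V, Y ⊆ X → Y.Nonempty → Y ∈ C.S) ∧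
  (∀ X ∈ C.S, ∀ v ∈ X, ∀ w ∈ X, C.chi v = C.chi w → v = w) ∧
  (∀ X, C.IsFacet X → X ∈ C.Wld) ∧ C.Wld ⊆ C.S ∧
  (∀ v : V, ∀ p ∈ C.vlabel v, owner p = C.chi v)

/-- The labelling of a world: the union of the labellings of its vertices. -/
def wlabel (C : LocalSimpData A AP V) (X : Finset V) : Set AP :=
  ⋃ v ∈ X, C.vlabel v

end LocalSimpData

/-- Purely propositional formulas. -/
inductive PForm (AP : Type) : Type
  | atom : AP → PForm AP
  | neg : PForm AP → PForm AP
  | and : PForm AP → PForm AP → PForm AP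

/-- The atomic propositions occurring in a propositional formula. -/
def PForm.atoms {AP : Type} : PForm AP → Set AP
  | .atom p => {p}
  | .neg ψ => ψ.atoms
  | .and ψ χ => ψ.atoms ∪ χ.atoms

/-- Satisfaction of propositional formulas at a world of a local simplicial model. -/
def PForm.psat {A AP V : Type} (C : LocalSimpData A AP V) (w : Finset V) : PForm AP → Prop
  | .atom p => p ∈ C.wlabel w
  | .neg ψ => ¬ PForm.psat C w ψ
  | .and ψ χ => PForm.psat C w ψ ∧ PForm.psat C w χ

/-- The guarded positive epistemic fragment:
`φ ::= (alive_B ⇒ ψ_B) | φ∧φ | φ∨φ | D_U φ | C_U φ`. -/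
inductive GForm (A AP : Type) : Type
  | guard : Finset A → PForm AP → GForm A AP
  | and : GForm A AP → GForm A AP → GForm A AP
  | or : GForm A AP → GForm A AP → GForm A AP
  | dk : Finset A → GForm A AP → GForm A AP
  | ck : Finset A → GForm A AP → GForm A AP

/-- Well-formedness of guarded formulas: in a guard `alive_B ⇒ ψ_B`, all atomic
propositions of `ψ_B` belong to agents of `B`. -/
def GForm.WF {A AP : Type} (owner : AP → A) : GForm A AP → Prop
  | .guard B ψ => ∀ p ∈ ψ.atoms, owner p ∈ B
  | .and φ₁ φ₂ => φ₁.WF owner ∧ φ₂.WF owner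
  | .or φ₁ φ₂ => φ₁.WF owner ∧ φ₂.WF owner
  | .dk _ φ => φ.WF owner
  | .ck _ φ => φ.WF owner

/-- Reachability through a sequence of worlds, consecutive ones sharing a
`U`-coloured simplex. -/
def creach {A AP V : Type} (C : LocalSimpData A AP V) (U : Finset A) :
    Finset V → Finset V → Prop :=
  Relation.ReflTransGen
    (fun X Y => Y ∈ C.Wld ∧ (↑U : Set A) ⊆ C.chi '' ((↑X : Set V) ∩ ↑Y))

/-- Satisfaction of guarded positive formulas on local simplicial models. -/
def GForm.gsat {A AP V : Type} (C : LocalSimpData A AP V) :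
    Finset V → GForm A AP → Prop
  | w, .guard B ψ => ((↑B : Set A) ⊆ C.chi '' (↑w : Set V)) → ψ.psat C w
  | w, .and φ₁ φ₂ => φ₁.gsat C w ∧ φ₂.gsat C w
  | w, .or φ₁ φ₂ => φ₁.gsat C w ∨ φ₂.gsat C w
  | w, .dk U φ => ∀ w' ∈ C.Wld, (↑U : Set A) ⊆ C.chi '' ((↑w : Set V) ∩ ↑w') → φ.gsat C w'
  | w, .ck U φ => ∀ w' ∈ C.Wld, creach C U w w' → φ.gsat C w'

/-- Image of a simplex under a vertex map. -/
def fimage {V V' : Type} (f : V → V') (X : Finset V) : Finset V' :=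
  X.image f

/-- Morphisms of local simplicial models: map simplexes to simplexes and worlds to
worlds, preserving colours and vertex labellings. -/
def IsMorphism {A AP V V' : Type} (C : LocalSimpData A AP V) (D : LocalSimpData A AP V')
    (f : V → V') : Prop :=
  (∀ X ∈ C.S, fimage f X ∈ D.S) ∧
  (∀ X ∈ C.Wld, fimage f X ∈ D.Wld) ∧
  (∀ v : V, D.chi (f v) = C.chi v) ∧
  (∀ v : V, D.vlabel (f v) = C.vlabel v)

end

set_option linter.unusedSectionVars false

namespace SCA

open Form

variable {A AP : Type}

section Sem

variable (v : Form A AP → Prop)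

variable (h1 : ∀ ψ : Form A AP, v ψ.neg ↔ ¬ v ψ)
  (h2 : ∀ ψ χ : Form A AP, v (ψ.and χ) ↔ (v ψ ∧ v χ))

include h1 h2

lemma vOr (φ ψ : Form A AP) : v (φ.or ψ) ↔ (v φ ∨ v ψ) := by
  unfold Form.or; rw [h1, h2, h1, h1]; tauto

lemma vImp (φ ψ : Form A AP) : v (φ.imp ψ) ↔ (v φ → v ψ) := by
  unfold Form.imp; rw [vOr v h1 h2, h1]; tauto

variable [Nonempty AP]

lemma vVerum : v (Form.verum : Form A AP) := by
  unfold Form.verum; rw [vOr v h1 h2, h1]; tauto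

lemma vFalsum : ¬ v (Form.falsum : Form A AP) := by
  unfold Form.falsum; rw [h1]; exact not_not_intro (vVerum v h1 h2)

lemma vBigAnd (L : List (Form A AP)) : v (Form.bigAnd L) ↔ ∀ ψ ∈ L, v ψ := by
  induction L with
  | nil => simp only [Form.bigAnd, List.not_mem_nil, false_implies, implies_true, iff_true]
           exact vVerum v h1 h2
  | cons φ t ih => simp only [Form.bigAnd, h2, ih, List.mem_cons]; aesop

lemma vBigOr (L : List (Form A AP)) : v (Form.bigOr L) ↔ ∃ ψ ∈ L, v ψ := by
  induction L with
  | nil => simp only [Form.bigOr, List.not_mem_nil, false_and, exists_false, iff_false]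
           exact vFalsum v h1 h2
  | cons φ t ih => simp only [Form.bigOr, vOr v h1 h2, ih, List.mem_cons]; aesop

end Sem

variable [Fintype A] [Nonempty AP] {Ax : Form A AP → Prop}

lemma prf_mp1 {φ ψ : Form A AP} (ht : IsTaut (φ.imp ψ)) (h : Prf Ax φ) : Prf Ax ψ :=
  (Prf.taut ht).mp h

lemma prf_mp2 {φ ψ χ : Form A AP} (ht : IsTaut (φ.imp (ψ.imp χ)))
    (ha : Prf Ax φ) (hb : Prf Ax ψ) : Prf Ax χ :=
  ((Prf.taut ht).mp ha).mp hb

variable {Γ : Set (Form A AP)}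

lemma mem_of_provesFrom (hΓ : MaxConsistent (Prf Ax) Γ) {φ : Form A AP}
    (h : ProvesFrom (Prf Ax) Γ φ) : φ ∈ Γ := by
  by_contra hφ
  have h2 : ¬ ConsistentSet (Prf Ax) (insert φ Γ) := hΓ.2 φ hφ
  rw [ConsistentSet, not_not] at h2
  obtain ⟨L₂, hL₂, hp₂⟩ := h2
  obtain ⟨L₁, hL₁, hp₁⟩ := h
  refine hΓ.1 ⟨L₁ ++ L₂.filter (· ≠ φ), ?_, ?_⟩
  · intro γ hγ
    rcases List.mem_append.mp hγ with hg | hg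
    · exact hL₁ γ hg
    · have hf := List.mem_filter.mp hg
      have hne : γ ≠ φ := by simpa using hf.2
      rcases hL₂ γ hf.1 with hg' | hg'
      · exact absurd hg' hne
      · exact hg'
  · refine prf_mp2 ?_ hp₁ hp₂
    intro v h1 h2
    simp only [vImp v h1 h2, vBigAnd v h1 h2]
    intro H1 H2 Hall
    refine H2 fun ψ hψ => ?_
    by_cases hc : ψ = φ
    · subst hc
      exact H1 fun χ hχ => Hall χ (List.mem_append_left _ hχ)
    · refine Hall ψ (List.mem_append_right _ ?_)
      rw [List.mem_filter]
      exact ⟨hψ, by simpa using hc⟩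

lemma mem_entails (hΓ : MaxConsistent (Prf Ax) Γ) (L : List (Form A AP))
    (hL : ∀ ψ ∈ L, ψ ∈ Γ) {φ : Form A AP}
    (H : ∀ v : Form A AP → Prop, (∀ ψ : Form A AP, v ψ.neg ↔ ¬ v ψ) →
      (∀ ψ χ : Form A AP, v (ψ.and χ) ↔ (v ψ ∧ v χ)) → (∀ ψ ∈ L, v ψ) → v φ) :
    φ ∈ Γ :=
  mem_of_provesFrom hΓ ⟨L, hL, Prf.taut (by
    intro v h1 h2
    rw [vImp v h1 h2, vBigAnd v h1 h2]
    exact H v h1 h2)⟩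

lemma mem_of_prf (hΓ : MaxConsistent (Prf Ax) Γ) {φ : Form A AP} (h : Prf Ax φ) : φ ∈ Γ :=
  mem_of_provesFrom hΓ ⟨[], by simp, prf_mp1 (by
    intro v h1 h2; simp only [vImp v h1 h2]; tauto) h⟩

lemma not_falsum_mem (hΓ : MaxConsistent (Prf Ax) Γ) : (Form.falsum : Form A AP) ∉ Γ := by
  intro hmem
  refine hΓ.1 ⟨[Form.falsum], by simpa using hmem, Prf.taut ?_⟩
  intro v h1 h2
  rw [vImp v h1 h2, vBigAnd v h1 h2]
  intro H; exact H _ (by simp)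

lemma neg_mem_of_not_mem (hΓ : MaxConsistent (Prf Ax) Γ) {φ : Form A AP} (h : φ ∉ Γ) :
    φ.neg ∈ Γ := by
  have h2 : ¬ ConsistentSet (Prf Ax) (insert φ Γ) := hΓ.2 φ h
  rw [ConsistentSet, not_not] at h2
  obtain ⟨L₂, hL₂, hp₂⟩ := h2
  refine mem_of_provesFrom hΓ ⟨L₂.filter (· ≠ φ), ?_, ?_⟩
  · intro γ hγ
    have hf := List.mem_filter.mp hγ
    have hne : γ ≠ φ := by simpa using hf.2
    rcases hL₂ γ hf.1 with hg' | hg'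
    · exact absurd hg' hne
    · exact hg'
  · refine prf_mp1 ?_ hp₂
    intro v h1 h2
    simp only [vImp v h1 h2, vBigAnd v h1 h2, h1]
    intro H1 Hall hvφ
    refine vFalsum v h1 h2 (H1 fun ψ hψ => ?_)
    by_cases hc : ψ = φ
    · subst hc; exact hvφ
    · refine Hall ψ ?_
      rw [List.mem_filter]
      exact ⟨hψ, by simpa using hc⟩

lemma not_both_mem (hΓ : MaxConsistent (Prf Ax) Γ) {φ : Form A AP}
    (h : φ ∈ Γ) (h' : φ.neg ∈ Γ) : False := by
  have : (Form.falsum : Form A AP) ∈ Γ := by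
    refine mem_entails hΓ [φ, φ.neg] (by simp [h, h']) ?_
    intro v h1 h2 Hall
    have hv := Hall φ (by simp)
    have hv' := Hall φ.neg (by simp)
    rw [h1] at hv'
    exact absurd hv hv'
  exact not_falsum_mem hΓ this

lemma neg_mem_iff (hΓ : MaxConsistent (Prf Ax) Γ) {φ : Form A AP} :
    φ.neg ∈ Γ ↔ φ ∉ Γ :=
  ⟨fun h h' => not_both_mem hΓ h' h, neg_mem_of_not_mem hΓ⟩

lemma mp_mem (hΓ : MaxConsistent (Prf Ax) Γ) {φ ψ : Form A AP}
    (h : (φ.imp ψ) ∈ Γ) (h' : φ ∈ Γ) : ψ ∈ Γ := by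
  refine mem_entails hΓ [φ.imp ψ, φ] (by simp [h, h']) ?_
  intro v h1 h2 Hall
  have hv := Hall (φ.imp ψ) (by simp)
  rw [vImp v h1 h2] at hv
  exact hv (Hall φ (by simp))

lemma and_mem (hΓ : MaxConsistent (Prf Ax) Γ) {φ ψ : Form A AP}
    (h : φ ∈ Γ) (h' : ψ ∈ Γ) : φ.and ψ ∈ Γ := by
  refine mem_entails hΓ [φ, ψ] (by simp [h, h']) ?_
  intro v h1 h2 Hall
  rw [h2]
  exact ⟨Hall φ (by simp), Hall ψ (by simp)⟩

lemma bigAnd_mem_iff (hΓ : MaxConsistent (Prf Ax) Γ) (L : List (Form A AP)) :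
    Form.bigAnd L ∈ Γ ↔ ∀ ψ ∈ L, ψ ∈ Γ := by
  constructor
  · intro h ψ hψ
    refine mem_entails hΓ [Form.bigAnd L] (by simp [h]) ?_
    intro v h1 h2 Hall
    have hv := Hall (Form.bigAnd L) (by simp)
    rw [vBigAnd v h1 h2] at hv
    exact hv ψ hψ
  · intro h
    refine mem_entails hΓ L h ?_
    intro v h1 h2 Hall
    rw [vBigAnd v h1 h2]; exact Hall

lemma bigOr_exists_mem (hΓ : MaxConsistent (Prf Ax) Γ) {L : List (Form A AP)}
    (h : Form.bigOr L ∈ Γ) : ∃ ψ ∈ L, ψ ∈ Γ := by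
  induction L with
  | nil => exact absurd h (not_falsum_mem hΓ)
  | cons φ t ih =>
    by_cases hc : φ ∈ Γ
    · exact ⟨φ, by simp, hc⟩
    · have hn : φ.neg ∈ Γ := neg_mem_of_not_mem hΓ hc
      have ht : Form.bigOr t ∈ Γ := by
        refine mem_entails hΓ [Form.bigOr (φ :: t), φ.neg] (by simp [h, hn]) ?_
        intro v h1 h2 Hall
        have hv := Hall _ List.mem_cons_self
        have hv' := Hall φ.neg (by simp)
        rw [h1] at hv'
        have : v (φ.or (Form.bigOr t)) := hv
        rw [vOr v h1 h2] at this
        tauto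
      obtain ⟨ψ, hψ, hψ'⟩ := ih ht
      exact ⟨ψ, by simp [hψ], hψ'⟩

lemma lindenbaum {Γ : Set (Form A AP)} (h : ConsistentSet (Prf Ax) Γ) :
    ∃ Δ, Γ ⊆ Δ ∧ MaxConsistent (Prf Ax) Δ := by
  have hch : ∀ c ⊆ {Δ : Set (Form A AP) | ConsistentSet (Prf Ax) Δ},
      IsChain (fun x1 x2 => x1 ⊆ x2) c → c.Nonempty →
      ∃ ub ∈ {Δ : Set (Form A AP) | ConsistentSet (Prf Ax) Δ}, ∀ s ∈ c, s ⊆ ub := by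
    intro c hcS hchain hcne
    refine ⟨⋃₀ c, ?_, fun s hs => Set.subset_sUnion_of_mem hs⟩
    rintro ⟨L, hL, hp⟩
    have key : ∀ L' : List (Form A AP), (∀ γ ∈ L', γ ∈ ⋃₀ c) → ∃ s ∈ c, ∀ γ ∈ L', γ ∈ s := by
      intro L'
      induction L' with
      | nil => exact fun _ => ⟨hcne.choose, hcne.choose_spec, by simp⟩
      | cons γ t ih =>
        intro hmem
        obtain ⟨s, hs, hst⟩ := ih fun x hx => hmem x (by simp [hx])
        obtain ⟨s', hs', hγ⟩ := hmem γ (by simp)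
        rcases hchain.total hs hs' with hss | hss
        · exact ⟨s', hs', fun x hx => by
            rcases List.mem_cons.mp hx with rfl | hx
            · exact hγ
            · exact hss (hst x hx)⟩
        · exact ⟨s, hs, fun x hx => by
            rcases List.mem_cons.mp hx with rfl | hx
            · exact hss hγ
            · exact hst x hx⟩
    obtain ⟨s, hs, hsub⟩ := key L hL
    exact hcS hs ⟨L, hsub, hp⟩
  obtain ⟨m, hm1, hm2⟩ := zorn_subset_nonempty
    {Δ : Set (Form A AP) | ConsistentSet (Prf Ax) Δ} hch Γ h
  refine ⟨m, hm1, hm2.1, ?_⟩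
  intro φ hφ hcon
  have : insert φ m ⊆ m := hm2.2 hcon (Set.subset_insert _ _)
  exact hφ (this (Set.mem_insert _ _))

end SCA

namespace SCA

open Form

variable {A AP : Type} [Fintype A] [Nonempty AP] {Ax : Form A AP → Prop}
variable {Γ : Set (Form A AP)}

lemma prf_dk_mono {φ ψ : Form A AP} (B : Finset A) (hB : B.Nonempty)
    (h : Prf Ax (φ.imp ψ)) : Prf Ax ((Form.dk B hB φ).imp (Form.dk B hB ψ)) :=
  (Prf.axK B hB).mp (Prf.nec B hB h)

lemma prf_dk_and (B : Finset A) (hB : B.Nonempty) (φ ψ : Form A AP) :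
    Prf Ax ((Form.dk B hB φ).imp ((Form.dk B hB ψ).imp (Form.dk B hB (φ.and ψ)))) := by
  have t1 : Prf Ax (Form.dk B hB (φ.imp (ψ.imp (φ.and ψ)))) := by
    refine Prf.nec B hB (Prf.taut ?_)
    intro v h1 h2
    simp only [vImp v h1 h2, h2 φ ψ]
    tauto
  have t3 : Prf Ax ((Form.dk B hB φ).imp (Form.dk B hB (ψ.imp (φ.and ψ)))) :=
    (Prf.axK B hB).mp t1
  have t4 := Prf.axK (Ax := Ax) (φ := ψ) (ψ := φ.and ψ) B hB
  refine prf_mp2 ?_ t3 t4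
  intro v h1 h2
  simp only [vImp v h1 h2]
  tauto

lemma dk_bigAnd_mem (hΓ : MaxConsistent (Prf Ax) Γ) (B : Finset A) (hB : B.Nonempty) :
    ∀ L : List (Form A AP), (∀ ψ ∈ L, Form.dk B hB ψ ∈ Γ) →
      Form.dk B hB (Form.bigAnd L) ∈ Γ := by
  intro L
  induction L with
  | nil =>
    intro _
    refine mem_of_prf hΓ (Prf.nec B hB (Prf.taut ?_))
    intro v h1 h2
    exact vVerum v h1 h2
  | cons φ t ih =>
    intro hmem
    have h1 : Form.dk B hB φ ∈ Γ := hmem φ (by simp)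
    have h2 : Form.dk B hB (Form.bigAnd t) ∈ Γ := ih fun ψ hψ => hmem ψ (by simp [hψ])
    have := mem_of_prf hΓ (prf_dk_and (Ax := Ax) B hB φ (Form.bigAnd t))
    exact mp_mem hΓ (mp_mem hΓ this h1) h2

/-- Existence lemma. -/
lemma existence (hΓ : MaxConsistent (Prf Ax) Γ) {B : Finset A} {hB : B.Nonempty}
    {φ : Form A AP} (h : (Form.dk B hB φ).neg ∈ Γ) :
    ∃ Δ, MaxConsistent (Prf Ax) Δ ∧ (∀ ψ, Form.dk B hB ψ ∈ Γ → ψ ∈ Δ) ∧ φ.neg ∈ Δ := by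
  set S : Set (Form A AP) := {ψ | Form.dk B hB ψ ∈ Γ} with hS
  have hcons : ConsistentSet (Prf Ax) (insert φ.neg S) := by
    rintro ⟨L, hL, hp⟩
    set L' : List (Form A AP) := L.filter (· ≠ φ.neg) with hL'
    have hL'mem : ∀ ψ ∈ L', Form.dk B hB ψ ∈ Γ := by
      intro ψ hψ
      have hf := List.mem_filter.mp hψ
      have hne : ψ ≠ φ.neg := by simpa using hf.2
      rcases hL ψ hf.1 with hg | hg
      · exact absurd hg hne
      · exact hg
    have hdk : Form.dk B hB (Form.bigAnd L') ∈ Γ := dk_bigAnd_mem hΓ B hB L' hL'mem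
    have himp : Prf Ax ((Form.bigAnd L').imp φ) := by
      refine prf_mp1 ?_ hp
      intro v h1 h2
      simp only [vImp v h1 h2, vBigAnd v h1 h2]
      intro H1 Hall
      by_contra hvφ
      refine vFalsum v h1 h2 (H1 fun ψ hψ => ?_)
      by_cases hc : ψ = φ.neg
      · subst hc; rw [h1]; exact hvφ
      · refine Hall ψ ?_
        rw [List.mem_filter]
        exact ⟨hψ, by simpa using hc⟩
    have : Form.dk B hB φ ∈ Γ :=
      mp_mem hΓ (mem_of_prf hΓ (prf_dk_mono B hB himp)) hdk
    exact not_both_mem hΓ this h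
  obtain ⟨Δ, hsub, hΔ⟩ := lindenbaum hcons
  refine ⟨Δ, hΔ, fun ψ hψ => hsub (Set.mem_insert_of_mem _ hψ), hsub (Set.mem_insert _ _)⟩

/-! Canonical relation properties -/

section Canonical

variable (Ax)

abbrev Wc := {Γ : Set (Form A AP) // MaxConsistent (Prf Ax) Γ}

abbrev Mc : PseudoData A AP (Wc Ax) := canonicalPsm A AP (Prf Ax)

variable {Ax}

lemma crel_symm {B : Finset A} {Γ Δ : Wc Ax} (h : (Mc Ax).rel B Γ Δ) :
    (Mc Ax).rel B Δ Γ := by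
  intro hB ψ hψ
  by_contra hc
  have hn : ψ.neg ∈ Γ.1 := neg_mem_of_not_mem Γ.2 hc
  have hax := Prf.axB (Ax := Ax) (φ := ψ.neg) B hB
  have h1 : Form.dk B hB (Form.neg (Form.dk B hB ψ.neg.neg)) ∈ Γ.1 :=
    mp_mem Γ.2 (mem_of_prf Γ.2 hax) hn
  have h2 : Form.neg (Form.dk B hB ψ.neg.neg) ∈ Δ.1 := h hB _ h1
  have h3 : Form.dk B hB ψ.neg.neg ∈ Δ.1 := by
    have hm : Prf Ax ((Form.dk B hB ψ).imp (Form.dk B hB ψ.neg.neg)) := by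
      refine prf_dk_mono B hB (Prf.taut ?_)
      intro v h1 h2
      simp only [vImp v h1 h2, h1]
      tauto
    exact mp_mem Δ.2 (mem_of_prf Δ.2 hm) hψ
  exact not_both_mem Δ.2 h3 h2

lemma crel_trans {B : Finset A} {Γ Δ Θ : Wc Ax} (h : (Mc Ax).rel B Γ Δ)
    (h' : (Mc Ax).rel B Δ Θ) : (Mc Ax).rel B Γ Θ := by
  intro hB ψ hψ
  have h4 : Form.dk B hB (Form.dk B hB ψ) ∈ Γ.1 :=
    mp_mem Γ.2 (mem_of_prf Γ.2 (Prf.ax4 (Ax := Ax) B hB)) hψ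
  exact h' hB ψ (h hB _ h4)

lemma crel_mono {B B' : Finset A} (hsub : B ⊆ B') {Γ Δ : Wc Ax}
    (h : (Mc Ax).rel B' Γ Δ) : (Mc Ax).rel B Γ Δ := by
  intro hB ψ hψ
  have hB' : B'.Nonempty := hB.mono hsub
  have : Form.dk B' hB' ψ ∈ Γ.1 :=
    mp_mem Γ.2 (mem_of_prf Γ.2 (Prf.axMono (Ax := Ax) B B' hB hB' hsub)) hψ
  exact h hB' ψ this

end Canonical

end SCA

namespace SCA

open Form List

variable {A AP : Type}

section HistGeneric

variable {W : Type} (M : PseudoData A AP W)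

/-- The last world of a path. -/
def lastOf (w : W) (s : List (Finset A × W)) : W := (s.map Prod.snd).getLastD w

@[simp] lemma lastOf_nil (w : W) : lastOf w ([] : List (Finset A × W)) = w := rfl

@[simp] lemma lastOf_cons (w x : W) (B : Finset A) (s : List (Finset A × W)) :
    lastOf w ((B, x) :: s) = lastOf x s := by
  unfold lastOf
  rw [List.map_cons, List.getLastD_cons]

lemma isHist_append (w : W) (s t : List (Finset A × W)) :
    IsHist M w (s ++ t) ↔ IsHist M w s ∧ IsHist M (lastOf w s) t := by
  induction s generalizing w with
  | nil => simp [IsHist]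
  | cons e s ih =>
    obtain ⟨B, x⟩ := e
    rw [lastOf_cons]
    show (M.rel B w x ∧ IsHist M x (s ++ t)) ↔
      (M.rel B w x ∧ IsHist M x s) ∧ IsHist M (lastOf x s) t
    rw [ih x, and_assoc]

lemma lastOf_append (w : W) (s t : List (Finset A × W)) :
    lastOf w (s ++ t) = lastOf (lastOf w s) t := by
  induction s generalizing w with
  | nil => rfl
  | cons e s ih => obtain ⟨B, x⟩ := e; simp [ih]

lemma hist_eq {h h' : Hist M} (h1 : h.first = h'.first) (h2 : h.steps = h'.steps) :
    h = h' := by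
  cases h; cases h'
  dsimp at h1 h2
  subst h1; subst h2
  rfl

lemma histStep_first {a : A} {h h' : Hist M} (st : histStep M a h h') :
    h.first = h'.first := by
  obtain ⟨B, w, _, hfe, _⟩ := st
  exact hfe.symm

/-- All steps of `h` and `h'` beyond the common prefix `c` involve agent `a`. -/
def GoodC (a : A) (h h' : Hist M) (c : List (Finset A × W)) : Prop :=
  c <+: h.steps ∧ c <+: h'.steps ∧
    (∀ e ∈ h.steps.drop c.length, a ∈ e.1) ∧ (∀ e ∈ h'.steps.drop c.length, a ∈ e.1)

lemma goodC_symm {a : A} {h h' : Hist M} {c : List (Finset A × W)}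
    (hg : GoodC M a h h' c) : GoodC M a h' h c :=
  ⟨hg.2.1, hg.1, hg.2.2.2, hg.2.2.1⟩

lemma good_of_step {a : A} {h h' : Hist M} (st : histStep M a h h') :
    GoodC M a h h' h.steps := by
  obtain ⟨B, w, haB, hfe, hse⟩ := st
  refine ⟨List.prefix_refl _, by rw [hse]; exact List.prefix_append _ _, ?_, ?_⟩
  · simp
  · rw [hse, List.drop_left]
    intro e he
    rcases List.mem_singleton.mp he with rfl
    exact haB

lemma goodC_tail {a : A} {h h₂ h' : Hist M} {c : List (Finset A × W)}
    (hG : GoodC M a h h₂ c) (hstep : histStep M a h₂ h' ∨ histStep M a h' h₂) :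
    ∃ c', GoodC M a h h' c' := by
  rcases hstep with st | st
  · obtain ⟨B, w, haB, hfe, hse⟩ := st
    refine ⟨c, hG.1, ?_, hG.2.2.1, ?_⟩
    · rw [hse]; exact hG.2.1.trans (List.prefix_append _ _)
    · rw [hse, List.drop_append]
      intro e he
      rcases List.mem_append.mp he with he | he
      · exact hG.2.2.2 e he
      · rcases List.mem_singleton.mp (List.drop_subset _ _ he) with rfl
        exact haB
  · obtain ⟨B, w, haB, hfe, hse⟩ := st
    by_cases hlen : c.length ≤ h'.steps.length
    · refine ⟨c, hG.1, ?_, hG.2.2.1, ?_⟩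
      · refine List.prefix_of_prefix_length_le hG.2.1 ?_ hlen
        rw [hse]; exact List.prefix_append _ _
      · intro e he
        refine hG.2.2.2 e ?_
        rw [hse, List.drop_append]
        exact List.mem_append_left _ he
    · have hceq : c = h₂.steps := by
        refine hG.2.1.eq_of_length ?_
        have h1 : c.length ≤ h₂.steps.length := hG.2.1.length_le
        have h2 : h₂.steps.length = h'.steps.length + 1 := by
          rw [hse]; simp
        omega
      refine ⟨h'.steps, ?_, List.prefix_refl _, ?_, by simp⟩
      · refine List.IsPrefix.trans ?_ hG.1
        rw [hceq, hse]; exact List.prefix_append _ _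
      · obtain ⟨r, hr⟩ := hG.1
        have hrdrop : h.steps.drop c.length = r := by rw [← hr, List.drop_left]
        intro e he
        rw [← hr, hceq, hse, List.append_assoc, List.drop_left] at he
        rcases List.mem_cons.mp he with rfl | he
        · exact haB
        · exact hG.2.2.1 e (by rw [hrdrop]; exact he)

lemma good_of_histRel {a : A} {h h' : Hist M} (hr : histRel M a h h') :
    h.first = h'.first ∧ ∃ c, GoodC M a h h' c := by
  induction hr with
  | single hstep =>
    rcases hstep with st | st
    · exact ⟨histStep_first M st, h.steps, good_of_step M st⟩
    · exact ⟨(histStep_first M st).symm, _, goodC_symm M (good_of_step M st)⟩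
  | tail hr hstep ih =>
    obtain ⟨hfe, c, hG⟩ := ih
    obtain ⟨c', hG'⟩ := goodC_tail M hG hstep
    refine ⟨?_, c', hG'⟩
    rcases hstep with st | st
    · exact hfe.trans (histStep_first M st)
    · exact hfe.trans (histStep_first M st).symm

end HistGeneric

section HistCanonical

variable [Fintype A] [Nonempty AP] {Ax : Form A AP → Prop}

lemma histStep_last_rel {a : A} {h h' : Hist (Mc (A := A) (AP := AP) Ax)}
    (st : histStep (Mc Ax) a h h') : (Mc Ax).rel {a} h.last h'.last := by
  obtain ⟨B, w, haB, hfe, hse⟩ := st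
  have hv := h'.valid
  rw [hse, hfe] at hv
  have hsp := (isHist_append (Mc Ax) h.first h.steps [(B, w)]).mp hv
  have hrel : (Mc Ax).rel B h.last w := hsp.2.1
  have hlast : h'.last = w := by
    show lastOf h'.first h'.steps = w
    rw [hse, hfe, lastOf_append]
    rfl
  rw [hlast]
  exact crel_mono (by simpa using haB) hrel

lemma histRel_last_rel {a : A} {h h' : Hist (Mc (A := A) (AP := AP) Ax)}
    (hr : histRel (Mc Ax) a h h') : (Mc Ax).rel {a} h.last h'.last := by
  induction hr with
  | single hstep =>
    rcases hstep with st | st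
    · exact histStep_last_rel st
    · exact crel_symm (histStep_last_rel st)
  | tail hr hstep ih =>
    rcases hstep with st | st
    · exact crel_trans ih (histStep_last_rel st)
    · exact crel_trans ih (crel_symm (histStep_last_rel st))

lemma live_iff {h : Hist (Mc (A := A) (AP := AP) Ax)} {a : A} :
    a ∈ (unravel (Mc Ax)).live h ↔ Form.aliveAgent a ∈ h.last.1 := by
  constructor
  · intro hr
    have hrel : (Mc Ax).rel {a} h.last h.last := histRel_last_rel hr
    have hdead : Form.deadAgent a ∉ h.last.1 := by
      intro hd
      exact not_falsum_mem h.last.2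
        (hrel (Finset.singleton_nonempty a) Form.falsum hd)
    exact neg_mem_of_not_mem h.last.2 hdead
  · intro halive
    obtain ⟨Δ, hΔ, hrel, -⟩ := existence h.last.2
      (B := {a}) (hB := Finset.singleton_nonempty a) (φ := Form.falsum) halive
    set Δ' : Wc (A := A) (AP := AP) Ax := ⟨Δ, hΔ⟩ with hΔ'
    have hrelc : (Mc Ax).rel {a} h.last Δ' := fun _ ψ hψ => hrel ψ hψ
    refine ?_
    have hvalid : IsHist (Mc Ax) h.first (h.steps ++ [({a}, Δ')]) :=
      (isHist_append (Mc Ax) h.first h.steps _).mpr ⟨h.valid, hrelc, trivial⟩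
    set h₂ : Hist (Mc (A := A) (AP := AP) Ax) := ⟨h.first, h.steps ++ [({a}, Δ')], hvalid⟩
    have step : histStep (Mc Ax) a h h₂ :=
      ⟨{a}, Δ', Finset.mem_singleton_self a, rfl, rfl⟩
    exact Relation.TransGen.tail (Relation.TransGen.single (Or.inl step)) (Or.inr step)

lemma live_nonempty (h : Hist (Mc (A := A) (AP := AP) Ax)) :
    ∃ a, a ∈ (unravel (Mc Ax)).live h := by
  have hNE := mem_of_prf h.last.2 (Prf.axNE (Ax := Ax))
  obtain ⟨ψ, hψmem, hψ⟩ := bigOr_exists_mem h.last.2 hNE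
  obtain ⟨a, -, rfl⟩ := List.mem_map.mp hψmem
  exact ⟨a, live_iff.mpr hψ⟩

lemma rel_of_histRel_forall {B : Finset A} (hB : B.Nonempty)
    {h h' : Hist (Mc (A := A) (AP := AP) Ax)} (hne : h ≠ h')
    (H : ∀ a ∈ B, histRel (Mc Ax) a h h') :
    (Mc Ax).rel B h.last h'.last := by
  have HG : ∀ a, ∃ c, a ∈ B → GoodC (Mc Ax) a h h' c := by
    intro a
    by_cases ha : a ∈ B
    · obtain ⟨-, c, hc⟩ := good_of_histRel (Mc Ax) (H a ha)
      exact ⟨c, fun _ => hc⟩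
    · exact ⟨[], fun hmem => absurd hmem ha⟩
  choose F hF using HG
  obtain ⟨a₀, ha₀, hmax⟩ := Finset.exists_max_image B (fun a => (F a).length) hB
  set c := F a₀ with hcdef
  have hGc : GoodC (Mc Ax) a₀ h h' c := hF a₀ ha₀
  have hfirst : h.first = h'.first := (good_of_histRel (Mc Ax) (H a₀ ha₀)).1
  have hdropB : ∀ e ∈ h.steps.drop c.length, B ⊆ e.1 := by
    intro e he a ha
    have hFa := hF a ha
    have hpre : F a <+: c := List.prefix_of_prefix_length_le hFa.1 hGc.1 (hmax a ha)
    have hle : (F a).length ≤ c.length := hpre.length_le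
    rw [← Nat.add_sub_cancel' hle, ← List.drop_drop] at he
    exact hFa.2.2.1 e (List.drop_subset _ _ he)
  have hdropB' : ∀ e ∈ h'.steps.drop c.length, B ⊆ e.1 := by
    intro e he a ha
    have hFa := hF a ha
    have hpre : F a <+: c := List.prefix_of_prefix_length_le hFa.1 hGc.1 (hmax a ha)
    have hle : (F a).length ≤ c.length := hpre.length_le
    rw [← Nat.add_sub_cancel' hle, ← List.drop_drop] at he
    exact hFa.2.2.2 e (List.drop_subset _ _ he)
  obtain ⟨s, hs⟩ := hGc.1
  obtain ⟨t, ht⟩ := hGc.2.1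
  have hsB : ∀ e ∈ s, B ⊆ e.1 := by
    intro e he
    refine hdropB e ?_
    rw [← hs, List.drop_left]; exact he
  have htB : ∀ e ∈ t, B ⊆ e.1 := by
    intro e he
    refine hdropB' e ?_
    rw [← ht, List.drop_left]; exact he
  have hvs : IsHist (Mc Ax) h.first (c ++ s) := by rw [hs]; exact h.valid
  have hvt : IsHist (Mc Ax) h.first (c ++ t) := by rw [ht, hfirst]; exact h'.valid
  set w₀ := lastOf h.first c with hw₀
  have hvs2 : IsHist (Mc Ax) w₀ s := ((isHist_append _ _ _ _).mp hvs).2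
  have hvt2 : IsHist (Mc Ax) w₀ t := ((isHist_append _ _ _ _).mp hvt).2
  have hlasth : h.last = lastOf w₀ s := by
    show lastOf h.first h.steps = _
    rw [← hs, lastOf_append]
  have hlasth' : h'.last = lastOf w₀ t := by
    show lastOf h'.first h'.steps = _
    rw [← ht, ← hfirst, lastOf_append]
  have rel_chain : ∀ (u : List (Finset A × Wc (A := A) (AP := AP) Ax)) (w : Wc Ax),
      IsHist (Mc Ax) w u → (∀ e ∈ u, B ⊆ e.1) → u ≠ [] →
      (Mc Ax).rel B w (lastOf w u) := by
    intro u
    induction u with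
    | nil => intro w _ _ hne'; exact absurd rfl hne'
    | cons e u ih =>
      obtain ⟨C, x⟩ := e
      intro w hv hsub _
      have hrel1 : (Mc Ax).rel B w x := crel_mono (hsub (C, x) (by simp)) hv.1
      rcases eq_or_ne u [] with rfl | hu
      · simpa using hrel1
      · rw [lastOf_cons]
        exact crel_trans hrel1 (ih x hv.2 (fun e he => hsub e (by simp [he])) hu)
  rcases eq_or_ne s [] with rfl | hsne
  · rcases eq_or_ne t [] with rfl | htne
    · exfalso
      refine hne (hist_eq (Mc Ax) hfirst ?_)
      rw [← hs, ← ht]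
    · rw [hlasth, hlasth']
      simpa using rel_chain t w₀ hvt2 htB htne
  · rcases eq_or_ne t [] with rfl | htne
    · rw [hlasth, hlasth']
      simpa using crel_symm (rel_chain s w₀ hvs2 hsB hsne)
    · rw [hlasth, hlasth']
      exact crel_trans (crel_symm (rel_chain s w₀ hvs2 hsB hsne))
        (rel_chain t w₀ hvt2 htB htne)

end HistCanonical

end SCA

namespace SCA

open Form

variable {A AP : Type} [Fintype A] [Nonempty AP] {Ax : Form A AP → Prop}
variable {Γ : Set (Form A AP)}

lemma dead_of_not_alive (hΓ : MaxConsistent (Prf Ax) Γ) {a : A}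
    (h : Form.aliveAgent a ∉ Γ) : Form.deadAgent a ∈ Γ := by
  by_contra hd
  exact h (neg_mem_of_not_mem hΓ hd)

lemma aliveGrp_cast {B B' : Finset A} (h : B = B') (hB : B.Nonempty) (hB' : B'.Nonempty) :
    (Form.aliveGrp B hB : Form A AP) = Form.aliveGrp B' hB' := by subst h; rfl

lemma aliveGrp_mem (hΓ : MaxConsistent (Prf Ax) Γ) {B : Finset A} (hB : B.Nonempty) :
    (∀ a ∈ B, Form.aliveAgent a ∈ Γ) → Form.aliveGrp B hB ∈ Γ := by
  induction hB using Finset.Nonempty.cons_induction with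
  | singleton a =>
    intro h
    exact h a (Finset.mem_singleton_self a)
  | cons a s hnot hs ih =>
    intro h
    have h1 : Form.aliveAgent a ∈ Γ := h a (Finset.mem_cons_self a s)
    have h2 : Form.aliveGrp s hs ∈ Γ := ih fun b hb => h b (Finset.mem_cons_of_mem hb)
    have hax := mem_of_prf hΓ
      (Prf.axUnion (Ax := Ax) {a} s (Finset.singleton_nonempty a) hs)
    have h3 : Form.aliveGrp ({a} ∪ s) (unionNE (Finset.singleton_nonempty a)) ∈ Γ :=
      mp_mem hΓ hax (and_mem hΓ h1 h2)
    have he : ({a} ∪ s : Finset A) = Finset.cons a s hnot := by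
      rw [Finset.cons_eq_insert, Finset.insert_eq]
    have h4 := aliveGrp_cast (AP := AP) he (unionNE (Finset.singleton_nonempty a))
      ⟨a, Finset.mem_cons_self a s⟩
    exact h4 ▸ h3

lemma deadGrp_mem_iff (hΓ : MaxConsistent (Prf Ax) Γ) (C : Finset A) :
    Form.deadGrp C ∈ Γ ↔ ∀ a ∈ C, Form.deadAgent a ∈ Γ := by
  rw [Form.deadGrp, bigAnd_mem_iff hΓ]
  constructor
  · intro h a ha
    exact h _ (List.mem_map_of_mem (Finset.mem_toList.mpr ha))
  · intro h ψ hψ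
    obtain ⟨a, ha, rfl⟩ := List.mem_map.mp hψ
    exact h a (Finset.mem_toList.mp ha)

lemma aliveAgent_of_aliveGrp (hΓ : MaxConsistent (Prf Ax) Γ) {B : Finset A}
    (hB : B.Nonempty) (hg : Form.aliveGrp B hB ∈ Γ) {a : A} (ha : a ∈ B) :
    Form.aliveAgent a ∈ Γ := by
  by_contra hc
  have hd : Form.deadAgent a ∈ Γ := dead_of_not_alive hΓ hc
  have hdk : Form.dk B hB Form.falsum ∈ Γ :=
    mp_mem hΓ (mem_of_prf hΓ (Prf.axMono (Ax := Ax) {a} B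
      (Finset.singleton_nonempty a) hB (Finset.singleton_subset_iff.mpr ha))) hd
  exact not_both_mem hΓ hdk hg

lemma unravel_minimal :
    (unravel (Mc (A := A) (AP := AP) MinAx)).Minimal := by
  intro h h' hss
  by_contra hcon
  push_neg at hcon
  set Bf : Finset A := Finset.univ.filter
    (fun a => a ∈ (unravel (Mc (A := A) (AP := AP) MinAx)).live h) with hBf
  have hBfmem : ∀ a, a ∈ Bf ↔ a ∈ (unravel (Mc (A := A) (AP := AP) MinAx)).live h := by
    intro a; simp [hBf]
  obtain ⟨a₁, ha₁⟩ := live_nonempty (Ax := MinAx (A := A) (AP := AP)) h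
  have hBfne : Bf.Nonempty := ⟨a₁, (hBfmem a₁).mpr ha₁⟩
  have hne : h ≠ h' := by
    rintro rfl; exact (ssubset_irrefl _) hss
  have hrelB : (Mc (A := A) (AP := AP) MinAx).rel Bf h.last h'.last :=
    rel_of_histRel_forall hBfne hne (fun a ha => hcon a ((hBfmem a).mp ha))
  have halive : Form.aliveGrp Bf hBfne ∈ h.last.1 :=
    aliveGrp_mem h.last.2 hBfne (fun a ha => live_iff.mp ((hBfmem a).mp ha))
  have hdead : Form.deadGrp Bfᶜ ∈ h.last.1 := by
    rw [deadGrp_mem_iff h.last.2]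
    intro a ha
    refine dead_of_not_alive h.last.2 ?_
    intro hal
    exact (Finset.mem_compl.mp ha) ((hBfmem a).mpr (live_iff.mpr hal))
  obtain ⟨b, hb1, hb2⟩ := Set.exists_of_ssubset hss
  have hbBf : b ∉ Bf := fun hc => hb2 ((hBfmem b).mp hc)
  have hBfuniv : Bf ≠ Finset.univ := by
    intro hc; exact hbBf (hc ▸ Finset.mem_univ b)
  have hmin : Prf (MinAx (A := A) (AP := AP))
      (((Form.aliveGrp Bf hBfne).and (Form.deadGrp Bfᶜ)).imp
        (Form.dk Bf hBfne (Form.deadGrp Bfᶜ))) :=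
    Prf.extra ⟨Bf, hBfne, hBfuniv, rfl⟩
  have hdk : Form.dk Bf hBfne (Form.deadGrp Bfᶜ) ∈ h.last.1 :=
    mp_mem h.last.2 (mem_of_prf h.last.2 hmin) (and_mem h.last.2 halive hdead)
  have hdead' : Form.deadGrp Bfᶜ ∈ h'.last.1 := hrelB hBfne _ hdk
  have hdb : Form.deadAgent b ∈ h'.last.1 :=
    (deadGrp_mem_iff h'.last.2 _).mp hdead' b (Finset.mem_compl.mpr hbBf)
  have hab : Form.aliveAgent b ∈ h'.last.1 := live_iff.mp hb1
  exact not_both_mem h'.last.2 hdb hab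

lemma unravel_maximal :
    (unravel (Mc (A := A) (AP := AP) MaxAx)).Maximal := by
  intro h' B hBne hBss
  set Bf : Finset A := Finset.univ.filter (fun a => a ∈ B) with hBf
  have hBfmem : ∀ a, a ∈ Bf ↔ a ∈ B := by intro a; simp [hBf]
  have hBfne : Bf.Nonempty := ⟨hBne.choose, (hBfmem _).mpr hBne.choose_spec⟩
  have hsub : ∀ a ∈ Bf, a ∈ (unravel (Mc (A := A) (AP := AP) MaxAx)).live h' :=
    fun a ha => hBss.1 ((hBfmem a).mp ha)
  have halive : Form.aliveGrp Bf hBfne ∈ h'.last.1 :=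
    aliveGrp_mem h'.last.2 hBfne (fun a ha => live_iff.mp (hsub a ha))
  obtain ⟨b, hb1, hb2⟩ := Set.exists_of_ssubset hBss
  have hBfuniv : Bf ≠ Finset.univ := fun hc =>
    hb2 ((hBfmem b).mp (hc ▸ Finset.mem_univ b))
  have hmax : Prf (MaxAx (A := A) (AP := AP))
      ((Form.aliveGrp Bf hBfne).imp
        (Form.neg (Form.dk Bf hBfne (Form.neg (Form.deadGrp Bfᶜ))))) :=
    Prf.extra ⟨Bf, hBfne, hBfuniv, rfl⟩
  have hneg : (Form.dk Bf hBfne ((Form.deadGrp Bfᶜ).neg)).neg ∈ h'.last.1 :=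
    mp_mem h'.last.2 (mem_of_prf h'.last.2 hmax) halive
  obtain ⟨Δ, hΔ, hrel, hdd⟩ := existence h'.last.2 hneg
  have hdead : Form.deadGrp Bfᶜ ∈ Δ := by
    refine mem_entails hΔ [((Form.deadGrp Bfᶜ).neg).neg] (by simp [hdd]) ?_
    intro v h1 h2 Hall
    have hv := Hall ((Form.deadGrp Bfᶜ).neg).neg (by simp)
    rw [h1, h1] at hv
    exact not_not.mp hv
  set Δ' : Wc (A := A) (AP := AP) MaxAx := ⟨Δ, hΔ⟩ with hΔ'
  have hrelc : (Mc (A := A) (AP := AP) MaxAx).rel Bf h'.last Δ' :=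
    fun _ ψ hψ => hrel ψ hψ
  have haliveΔ : Form.aliveGrp Bf hBfne ∈ Δ := by
    by_contra hc
    have hdk : Form.dk Bf hBfne Form.falsum ∈ Δ := by
      by_contra hdk
      exact hc (neg_mem_of_not_mem hΔ hdk)
    exact not_falsum_mem h'.last.2 (crel_symm hrelc hBfne Form.falsum hdk)
  have haΔ : ∀ a ∈ Bf, Form.aliveAgent a ∈ Δ :=
    fun a ha => aliveAgent_of_aliveGrp hΔ hBfne haliveΔ ha
  have hdΔ : ∀ a, a ∉ Bf → Form.deadAgent a ∈ Δ := fun a ha =>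
    (deadGrp_mem_iff hΔ _).mp hdead a (Finset.mem_compl.mpr ha)
  have hvalid : IsHist (Mc (A := A) (AP := AP) MaxAx) h'.first
      (h'.steps ++ [(Bf, Δ')]) :=
    (isHist_append _ _ _ _).mpr ⟨h'.valid, hrelc, trivial⟩
  set h : Hist (Mc (A := A) (AP := AP) MaxAx) :=
    ⟨h'.first, h'.steps ++ [(Bf, Δ')], hvalid⟩ with hdef
  have hlast : h.last = Δ' := by
    show lastOf h'.first (h'.steps ++ [(Bf, Δ')]) = Δ'
    rw [lastOf_append]; rfl
  refine ⟨h, ?_, ?_⟩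
  · ext a
    have hiff : a ∈ (unravel (Mc (A := A) (AP := AP) MaxAx)).live h ↔
        Form.aliveAgent a ∈ Δ := by rw [live_iff, hlast]
    rw [hiff]
    constructor
    · intro hal
      by_contra hc
      have hd : Form.deadAgent a ∈ Δ := hdΔ a (fun hmem => hc ((hBfmem a).mp hmem))
      exact not_both_mem hΔ hd hal
    · intro haB
      exact haΔ a ((hBfmem a).mpr haB)
  · intro a ha
    exact Relation.TransGen.single (Or.inr ⟨Bf, Δ', (hBfmem a).mpr ha, rfl, rfl⟩)

section Properify

variable {W : Type} (M : PEData A AP W)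
variable (hsym : ∀ a, Symmetric (M.rel a)) (htr : ∀ a, Transitive (M.rel a))

include hsym htr

lemma pequiv_equivalence : Equivalence (pequiv M) := by
  constructor
  · intro w
    exact ⟨rfl, fun a ha => ha⟩
  · intro w w' ⟨hl, hr⟩
    exact ⟨hl.symm, fun a ha => hsym a (hr a (hl ▸ ha))⟩
  · intro w v u ⟨hl1, hr1⟩ ⟨hl2, hr2⟩
    refine ⟨hl1.trans hl2, fun a ha => ?_⟩
    exact htr a (hr1 a ha) (hr2 a (hl1 ▸ ha))

lemma quot_eq_iff {w w' : W} :
    Quot.mk (pequiv M) w = Quot.mk (pequiv M) w' ↔ pequiv M w w' := by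
  rw [Quot.eq]
  exact Equivalence.eqvGen_iff (pequiv_equivalence M hsym htr)

lemma properify_rel_of {a : A} {w w' : W}
    (h : (properify M).rel a (Quot.mk (pequiv M) w) (Quot.mk (pequiv M) w')) :
    M.rel a w w' := by
  obtain ⟨w₁, w₂, he1, he2, hrel⟩ := h
  have e1 : pequiv M w w₁ := (quot_eq_iff M hsym htr).mp he1
  have e2 : pequiv M w' w₂ := (quot_eq_iff M hsym htr).mp he2
  have ha1 : M.rel a w₁ w₁ := htr a hrel (hsym a hrel)
  have ha2 : M.rel a w₂ w₂ := htr a (hsym a hrel) hrel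
  have hw1 : M.rel a w w₁ := e1.2 a (by rw [e1.1]; exact ha1)
  have hw2 : M.rel a w' w₂ := e2.2 a (by rw [e2.1]; exact ha2)
  exact htr a (htr a hw1 hrel) (hsym a hw2)

lemma properify_live (w : W) :
    (properify M).live (Quot.mk (pequiv M) w) = M.live w := by
  ext a
  constructor
  · intro h
    exact properify_rel_of M hsym htr h
  · intro h
    exact ⟨w, w, rfl, rfl, h⟩

lemma properify_minimal (hmin : M.Minimal) : (properify M).Minimal := by
  intro x y hss
  obtain ⟨w, rfl⟩ := Quot.exists_rep x
  obtain ⟨w', rfl⟩ := Quot.exists_rep y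
  rw [properify_live M hsym htr, properify_live M hsym htr] at hss
  obtain ⟨a, ha, hnr⟩ := hmin w w' hss
  refine ⟨a, ?_, ?_⟩
  · rw [properify_live M hsym htr]; exact ha
  · intro hc
    exact hnr (properify_rel_of M hsym htr hc)

lemma properify_maximal (hmax : M.Maximal) : (properify M).Maximal := by
  intro y B hBne hss
  obtain ⟨w', rfl⟩ := Quot.exists_rep y
  rw [properify_live M hsym htr] at hss
  obtain ⟨w, hw, hrel⟩ := hmax w' B hBne hss
  refine ⟨Quot.mk _ w, ?_, fun a ha => ⟨w, w', rfl, rfl, hrel a ha⟩⟩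
  rw [properify_live M hsym htr]
  exact hw

end Properify

lemma unravel_symm {W : Type} (M : PseudoData A AP W) (a : A) :
    Symmetric ((unravel M).rel a) := by
  intro x y hxy
  induction hxy with
  | single h => exact Relation.TransGen.single (Or.symm h)
  | tail hr hstep ih => exact Relation.TransGen.head (Or.symm hstep) ih

lemma unravel_trans {W : Type} (M : PseudoData A AP W) (a : A) :
    Transitive ((unravel M).rel a) :=
  fun _ _ _ h1 h2 => Relation.TransGen.trans h1 h2

end SCA

/-- Minimality and maximality of the unravelled canonical models: the
unravelling of the canonical pseudo-model of `SCmin` is a minimal partial epistemic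
model, the unravelling of the canonical pseudo-model of `SCmax` is a maximal partial
epistemic model, and the same holds for their quotients by `≡`. -/
theorem unravel_canonical_min_max (A AP : Type) [Fintype A] [Nonempty AP] :
    (unravel (canonicalPsm A AP SCmin)).Minimal ∧
    (unravel (canonicalPsm A AP SCmax)).Maximal ∧
    (properify (unravel (canonicalPsm A AP SCmin))).Minimal ∧
    (properify (unravel (canonicalPsm A AP SCmax))).Maximal := by
  have hmin : (unravel (canonicalPsm A AP SCmin)).Minimal := SCA.unravel_minimal
  have hmax : (unravel (canonicalPsm A AP SCmax)).Maximal := SCA.unravel_maximal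
  refine ⟨hmin, hmax, ?_, ?_⟩
  · exact SCA.properify_minimal _ (fun a => SCA.unravel_symm _ a)
      (fun a => SCA.unravel_trans _ a) hmin
  · exact SCA.properify_maximal _ (fun a => SCA.unravel_symm _ a)
      (fun a => SCA.unravel_trans _ a) hmax
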